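/- For every θ ∈ (1/2,1) and γ ∈ (0,1), the exponent ζ_− = ln((1 − √D)/(2γθ)) / ln((1−θ)/θ), where D = 1 − 4γ²θ(1−θ), satisfies ζ_− > 1; consequently the decision boundary of the one-fair-coin bandit, β_c = −1/(2ζ_− − 1), lies in the open interval (−1, 0). -/
import Mathlib


/-!
For `θ ∈ (1/2,1)` and `γ ∈ (0,1)`, the exponent
`ζ_− = ln((1 − √D)/(2γθ)) / ln((1−θ)/θ)` with `D = 1 − 4γ²θ(1−θ)` satisfies
`ζ_− > 1`, hence the decision boundary of the one-fair-coin bandit,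
`β_c = −1/(2ζ_− − 1)`, lies in the open interval `(−1, 0)`.
-/

/-- The discriminant `D = 1 − 4γ²θ(1−θ)`. -/
noncomputable def Dq (θ γ : ℝ) : ℝ := 1 - 4 * γ ^ 2 * θ * (1 - θ)

/-- The exponent `ζ_− = ln((1 − √D)/(2γθ)) / ln((1−θ)/θ)`. -/
noncomputable def zetaMinus (θ γ : ℝ) : ℝ :=
  Real.log ((1 - Real.sqrt (Dq θ γ)) / (2 * γ * θ)) / Real.log ((1 - θ) / θ)

theorem zeta_minus_gt_one_and_decision_boundary
    (θ γ : ℝ) (hθ : θ ∈ Set.Ioo (1 / 2 : ℝ) 1) (hγ : γ ∈ Set.Ioo (0 : ℝ) 1) :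
    1 < zetaMinus θ γ ∧
      -1 / (2 * zetaMinus θ γ - 1) ∈ Set.Ioo (-1 : ℝ) 0 := by
  obtain ⟨hθ1, hθ2⟩ := hθ
  obtain ⟨hγ1, hγ2⟩ := hγ
  have hθ0 : 0 < θ := by linarith
  have h1θ : 0 < 1 - θ := by linarith
  have hD0 : 0 < Dq θ γ := by
    unfold Dq
    nlinarith [sq_nonneg (1 - 2*θ), sq_nonneg γ, sq_nonneg (γ*(1-2*θ))]
  have hD1 : Dq θ γ < 1 := by
    unfold Dq
    nlinarith [mul_pos (mul_pos (pow_pos hγ1 2) hθ0) h1θ]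
  have hsD : Real.sqrt (Dq θ γ) < 1 := by
    rw [show (1:ℝ) = Real.sqrt 1 by simp]
    exact Real.sqrt_lt_sqrt hD0.le hD1
  have hsDnn : 0 < Real.sqrt (Dq θ γ) := Real.sqrt_pos.mpr hD0
  -- key inequality : 1 - 2γ(1-θ) < √D
  have hkey : 1 - 2 * γ * (1 - θ) < Real.sqrt (Dq θ γ) := by
    rcases le_or_gt (1 - 2 * γ * (1 - θ)) 0 with h | h
    · linarith
    · have hsq : (1 - 2 * γ * (1 - θ)) ^ 2 < Dq θ γ := by
        unfold Dq
        nlinarith [mul_pos (mul_pos hγ1 h1θ) (by linarith : (0:ℝ) < 1 - γ)]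
      nlinarith [Real.sq_sqrt hD0.le, Real.sqrt_nonneg (Dq θ γ),
        sq_nonneg (Real.sqrt (Dq θ γ) - (1 - 2 * γ * (1 - θ)))]
  -- x < b
  have hden : 0 < 2 * γ * θ := by positivity
  have hxpos : 0 < (1 - Real.sqrt (Dq θ γ)) / (2 * γ * θ) := by
    apply div_pos (by linarith) hden
  have hxb : (1 - Real.sqrt (Dq θ γ)) / (2 * γ * θ) < (1 - θ) / θ := by
    rw [div_lt_div_iff₀ hden hθ0]
    nlinarith
  have hb1 : (1 - θ) / θ < 1 := by
    rw [div_lt_one hθ0]; linarith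
  have hbpos : 0 < (1 - θ) / θ := div_pos h1θ hθ0
  have hlogb : Real.log ((1 - θ) / θ) < 0 := Real.log_neg hbpos hb1
  have hlogx : Real.log ((1 - Real.sqrt (Dq θ γ)) / (2 * γ * θ)) <
      Real.log ((1 - θ) / θ) := Real.log_lt_log hxpos hxb
  have hz : 1 < zetaMinus θ γ := by
    unfold zetaMinus
    rw [lt_div_iff_of_neg hlogb]
    linarith
  refine ⟨hz, ?_, ?_⟩
  · have hs : 1 < 2 * zetaMinus θ γ - 1 := by linarith
    rw [neg_div, neg_lt_neg_iff, div_lt_one (by linarith)]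
    linarith
  · apply div_neg_of_neg_of_pos (by norm_num)
    linarith
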